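/- Let E = ℝ^n with the Euclidean inner product, let 0 < m ≤ L, let Q : E → E be a symmetric linear map with m·‖x‖² ≤ ⟨x, Q x⟩ ≤ L·‖x‖² for all x, let b ∈ E, and let x⋆ be the unique point with Q x⋆ = b (the minimizer of the quadratic f(x) = (1/2)⟨x, Q x⟩ − ⟨b, x⟩). Set α = 4/(√L + √m)² and β = ((√L − √m)/(√L + √m))². Then for every ρ with √β < ρ < 1, there exists c > 0 such that every sequence (x^k) satisfying the Heavy-ball iteration x^{k+1} = x^k − α·(Q x^k − b) + β·(x^k − x^{k−1}) for all k ≥ 1 obeys ‖x^k − x⋆‖ ≤ c·ρ^k·(‖x^0 − x⋆‖ + ‖x^1 − x⋆‖) for all k ≥ 0. -/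

import Mathlib

open RealInnerProductSpace

/-- The "discrete Chebyshev" sequence attached to the recurrence
`u (k+2) = a * u (k+1) - t^2 * u k`. -/
noncomputable def hbP (a t : ℝ) : ℕ → ℝ
  | 0 => 0
  | 1 => 1
  | (k + 2) => a * hbP a t (k + 1) - t ^ 2 * hbP a t k

lemma hbP_energy (a t : ℝ) :
    ∀ k : ℕ, t ^ 2 * (hbP a t k) ^ 2 + (hbP a t (k + 1)) ^ 2
      - a * hbP a t k * hbP a t (k + 1) = (t ^ 2) ^ k := by
  intro k
  induction k with
  | zero => simp [hbP]
  | succ n ih =>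
    have h2 : hbP a t (n + 2) = a * hbP a t (n + 1) - t ^ 2 * hbP a t n := rfl
    rw [h2]
    linear_combination t ^ 2 * ih

lemma hbP_step (a t : ℝ) (ht : 0 ≤ t) (ha : |a| ≤ 2 * t) (k : ℕ) :
    |hbP a t (k + 1)| ≤ t * |hbP a t k| + t ^ k := by
  have E := hbP_energy a t k
  set p := hbP a t k
  set q := hbP a t (k + 1)
  have h1 : a * p * q ≤ 2 * t * |p| * |q| := by
    calc a * p * q ≤ |a * p * q| := le_abs_self _
    _ = |a| * |p| * |q| := by rw [abs_mul, abs_mul]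
    _ ≤ 2 * t * |p| * |q| := by
        apply mul_le_mul_of_nonneg_right _ (abs_nonneg _)
        exact mul_le_mul_of_nonneg_right ha (abs_nonneg _)
  have h2 : (|q| - t * |p|) ^ 2 ≤ (t ^ k) ^ 2 := by
    have hq2 : |q| ^ 2 = q ^ 2 := sq_abs q
    have hp2 : |p| ^ 2 = p ^ 2 := sq_abs p
    have htk : (t ^ k) ^ 2 = (t ^ 2) ^ k := by ring
    nlinarith [h1, E]
  have htk0 : 0 ≤ t ^ k := pow_nonneg ht k
  nlinarith [h2, htk0, abs_nonneg p, abs_nonneg q, mul_nonneg ht (abs_nonneg p)]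

lemma hbP_bound (a t ρ : ℝ) (ht : 0 ≤ t) (htρ : t < ρ) (ha : |a| ≤ 2 * t) :
    ∀ k : ℕ, |hbP a t k| ≤ ρ ^ k / (ρ - t) := by
  have hρt : 0 < ρ - t := by linarith
  intro k
  induction k with
  | zero =>
    simp only [hbP, abs_zero, pow_zero]
    positivity
  | succ n ih =>
    have hstep := hbP_step a t ht ha n
    have htn : t ^ n ≤ ρ ^ n := pow_le_pow_left₀ ht htρ.le n
    calc |hbP a t (n + 1)| ≤ t * |hbP a t n| + t ^ n := hstep
    _ ≤ t * (ρ ^ n / (ρ - t)) + ρ ^ n := by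
        have := mul_le_mul_of_nonneg_left ih ht
        linarith
    _ = ρ ^ (n + 1) / (ρ - t) := by
        field_simp
        ring

lemma scalar_bound (t ρ a : ℝ) (ht : 0 ≤ t) (htρ : t < ρ) (hρ1 : ρ ≤ 1)
    (ha : |a| ≤ 2 * t) (u : ℕ → ℝ)
    (hu : ∀ k : ℕ, 1 ≤ k → u (k + 1) = a * u k - t ^ 2 * u (k - 1)) :
    ∀ k : ℕ, |u k| ≤ (1 / ρ + 1 / (ρ - t)) * ρ ^ k * (|u 0| + |u 1|) := by
  have hρ0 : 0 < ρ := lt_of_le_of_lt ht htρ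
  have hρt : 0 < ρ - t := by linarith
  -- closed form via hbP
  have key : ∀ k : ℕ, u (k + 1) = hbP a t (k + 1) * u 1 - t ^ 2 * hbP a t k * u 0 ∧
      u (k + 2) = hbP a t (k + 2) * u 1 - t ^ 2 * hbP a t (k + 1) * u 0 := by
    intro k
    induction k with
    | zero =>
      constructor
      · simp [hbP]
      · have h2 := hu 1 le_rfl
        rw [h2]
        show a * u 1 - t ^ 2 * u 0 =
          (a * hbP a t 1 - t ^ 2 * hbP a t 0) * u 1 - t ^ 2 * hbP a t 1 * u 0
        simp only [hbP]
        ring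
    | succ n ih =>
      refine ⟨ih.2, ?_⟩
      have h3 : u (n + 3) = a * u (n + 2) - t ^ 2 * u (n + 1) := by
        have := hu (n + 2) (by omega); simpa using this
      have h4 : hbP a t (n + 3) = a * hbP a t (n + 2) - t ^ 2 * hbP a t (n + 1) := rfl
      have h5 : hbP a t (n + 2) = a * hbP a t (n + 1) - t ^ 2 * hbP a t n := rfl
      show u (n + 3) = hbP a t (n + 3) * u 1 - t ^ 2 * hbP a t (n + 2) * u 0
      rw [h3, ih.1, ih.2, h4, h5]
      ring
  intro k
  have hC1 : (1 : ℝ) ≤ 1 / ρ + 1 / (ρ - t) := by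
    have : (1 : ℝ) ≤ 1 / ρ := by
      rw [le_div_iff₀ hρ0]; linarith
    have h2 : 0 < 1 / (ρ - t) := by positivity
    linarith
  match k with
  | 0 =>
    simp only [pow_zero, mul_one]
    have h2 : (0:ℝ) ≤ |u 0| + |u 1| := by positivity
    nlinarith [abs_nonneg (u 1), hC1, h2]
  | (j + 1) =>
    have hform := (key j).1
    have hb1 : |hbP a t (j + 1)| ≤ ρ ^ (j + 1) / (ρ - t) := hbP_bound a t ρ ht htρ ha (j + 1)
    have hb0 : |hbP a t j| ≤ ρ ^ j / (ρ - t) := hbP_bound a t ρ ht htρ ha j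
    have ht2 : t ^ 2 * (ρ ^ j / (ρ - t)) ≤ ρ ^ (j + 1) / (ρ - t) := by
      have h1 : t ^ 2 ≤ ρ := by nlinarith
      have h2 : 0 ≤ ρ ^ j / (ρ - t) := by positivity
      calc t ^ 2 * (ρ ^ j / (ρ - t)) ≤ ρ * (ρ ^ j / (ρ - t)) :=
        mul_le_mul_of_nonneg_right h1 h2
      _ = ρ ^ (j + 1) / (ρ - t) := by rw [pow_succ]; ring
    calc |u (j + 1)| = |hbP a t (j + 1) * u 1 - t ^ 2 * hbP a t j * u 0| := by rw [hform]
    _ ≤ |hbP a t (j + 1)| * |u 1| + t ^ 2 * |hbP a t j| * |u 0| := by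
        calc |hbP a t (j + 1) * u 1 - t ^ 2 * hbP a t j * u 0|
            ≤ |hbP a t (j + 1) * u 1| + |t ^ 2 * hbP a t j * u 0| := abs_sub _ _
        _ = |hbP a t (j + 1)| * |u 1| + t ^ 2 * |hbP a t j| * |u 0| := by
            rw [abs_mul, abs_mul, abs_mul, abs_pow, sq_abs]
    _ ≤ (ρ ^ (j + 1) / (ρ - t)) * |u 1| + (ρ ^ (j + 1) / (ρ - t)) * |u 0| := by
        have e1 := mul_le_mul_of_nonneg_right hb1 (abs_nonneg (u 1))
        have e2 : t ^ 2 * |hbP a t j| * |u 0| ≤ (ρ ^ (j + 1) / (ρ - t)) * |u 0| := by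
          have := mul_le_mul_of_nonneg_left hb0 (sq_nonneg t)
          have := mul_le_mul_of_nonneg_right this (abs_nonneg (u 0))
          calc t ^ 2 * |hbP a t j| * |u 0| ≤ t ^ 2 * (ρ ^ j / (ρ - t)) * |u 0| := this
          _ ≤ (ρ ^ (j + 1) / (ρ - t)) * |u 0| :=
            mul_le_mul_of_nonneg_right ht2 (abs_nonneg (u 0))
        linarith
    _ = (1 / (ρ - t)) * ρ ^ (j + 1) * (|u 0| + |u 1|) := by ring
    _ ≤ (1 / ρ + 1 / (ρ - t)) * ρ ^ (j + 1) * (|u 0| + |u 1|) := by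
        have : (0:ℝ) ≤ 1 / ρ := by positivity
        have hpos : (0:ℝ) ≤ ρ ^ (j + 1) * (|u 0| + |u 1|) := by positivity
        nlinarith

set_option maxHeartbeats 1000000 in
/-- Accelerated linear convergence of the Heavy-ball method for a strongly convex
quadratic `f(x) = (1/2)⟪x, Qx⟫ − ⟪b, x⟫` on `ℝ^n`, with the optimal tuning
`α = 4/(√L + √m)²`, `β = ((√L − √m)/(√L + √m))²`: for every `√β < ρ < 1` there is a
constant `c > 0` bounding `‖x^k − x⋆‖ ≤ c ρ^k (‖x^0 − x⋆‖ + ‖x^1 − x⋆‖)`. -/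
theorem heavy_ball_quadratic_rate
    (n : ℕ) (m L : ℝ) (hm : 0 < m) (hmL : m ≤ L)
    (Q : EuclideanSpace ℝ (Fin n) →ₗ[ℝ] EuclideanSpace ℝ (Fin n))
    (hQsymm : ∀ x y : EuclideanSpace ℝ (Fin n), ⟪Q x, y⟫ = ⟪x, Q y⟫)
    (hQlb : ∀ x : EuclideanSpace ℝ (Fin n), m * ‖x‖ ^ 2 ≤ ⟪x, Q x⟫)
    (hQub : ∀ x : EuclideanSpace ℝ (Fin n), ⟪x, Q x⟫ ≤ L * ‖x‖ ^ 2)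
    (b xstar : EuclideanSpace ℝ (Fin n)) (hstar : Q xstar = b)
    (α β : ℝ)
    (hαdef : α = 4 / (Real.sqrt L + Real.sqrt m) ^ 2)
    (hβdef : β = ((Real.sqrt L - Real.sqrt m) / (Real.sqrt L + Real.sqrt m)) ^ 2) :
    ∀ ρ : ℝ, Real.sqrt β < ρ → ρ < 1 →
      ∃ c : ℝ, 0 < c ∧
        ∀ x : ℕ → EuclideanSpace ℝ (Fin n),
          (∀ k : ℕ, 1 ≤ k → x (k + 1) = x k - α • (Q (x k) - b) + β • (x k - x (k - 1))) →
          ∀ k : ℕ, ‖x k - xstar‖ ≤ c * ρ ^ k * (‖x 0 - xstar‖ + ‖x 1 - xstar‖) := by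
  intro ρ hβρ hρ1
  have hL : 0 < L := lt_of_lt_of_le hm hmL
  set p := Real.sqrt L with hp
  set q := Real.sqrt m with hq
  have hq0 : 0 < q := Real.sqrt_pos.2 hm
  have hp0 : 0 < p := Real.sqrt_pos.2 hL
  have hpq : q ≤ p := Real.sqrt_le_sqrt hmL
  have hd0 : 0 < p + q := by linarith
  have hp2 : p ^ 2 = L := Real.sq_sqrt hL.le
  have hq2 : q ^ 2 = m := Real.sq_sqrt hm.le
  have hβ0 : 0 ≤ β := by rw [hβdef]; positivity
  set t := Real.sqrt β with htdef
  have ht0 : 0 ≤ t := Real.sqrt_nonneg β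
  have ht2 : t ^ 2 = β := Real.sq_sqrt hβ0
  have htval : t = (p - q) / (p + q) := by
    rw [htdef, hβdef]
    exact Real.sqrt_sq (div_nonneg (by linarith) (by linarith))
  have hρ0 : 0 < ρ := lt_of_le_of_lt ht0 hβρ
  -- eigendecomposition
  have hQsym : Q.IsSymmetric := hQsymm
  set B := hQsym.eigenvectorBasis finrank_euclideanSpace_fin with hB
  set lam := hQsym.eigenvalues finrank_euclideanSpace_fin with hlam
  have hlam_mem : ∀ i : Fin n, m ≤ lam i ∧ lam i ≤ L := by
    intro i
    have hnorm : ‖B i‖ = 1 := B.orthonormal.1 i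
    have happ : Q (B i) = lam i • B i := hQsym.apply_eigenvectorBasis _ i
    have hinner : ⟪B i, Q (B i)⟫ = lam i := by
      rw [happ, real_inner_smul_right, real_inner_self_eq_norm_sq, hnorm]
      ring
    constructor
    · have := hQlb (B i); rw [hinner, hnorm] at this; simpa using this
    · have := hQub (B i); rw [hinner, hnorm] at this; simpa using this
  -- coefficient bound
  have hacoef : ∀ i : Fin n, |1 + β - α * lam i| ≤ 2 * t := by
    intro i
    obtain ⟨hml, hlL⟩ := hlam_mem i
    have hne : (p + q) ≠ 0 := ne_of_gt hd0
    have hα' : α * (p + q) ^ 2 = 4 := by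
      rw [hαdef]; field_simp
    have hβ' : β * (p + q) ^ 2 = (p - q) ^ 2 := by
      rw [hβdef]; field_simp
    have ht' : t * (p + q) = p - q := by
      rw [htval]; field_simp
    have hd2 : 0 < (p + q) ^ 2 := by positivity
    rw [abs_le]
    constructor
    · rw [← sub_nonneg]
      have key : (1 + β - α * lam i - (-(2 * t))) * (p + q) ^ 2 =
          (p + q) ^ 2 + (p - q) ^ 2 - 4 * lam i + 2 * (p - q) * (p + q) := by
        have e1 : 2 * t * (p + q) ^ 2 = 2 * (p - q) * (p + q) := by
          linear_combination 2 * (p + q) * ht'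
        linear_combination hβ' - lam i * hα' + e1
      have hpos : 0 ≤ (1 + β - α * lam i - (-(2 * t))) * (p + q) ^ 2 := by
        rw [key]
        have e2 : (p + q) ^ 2 + (p - q) ^ 2 - 4 * lam i + 2 * (p - q) * (p + q) =
            4 * p ^ 2 - 4 * lam i := by ring
        rw [e2]
        linarith [hlL, hp2.ge, hp2.le]
      have h5 := div_nonneg hpos hd2.le
      rwa [mul_div_cancel_right₀ _ (ne_of_gt hd2)] at h5
    · rw [← sub_nonneg]
      have key : (2 * t - (1 + β - α * lam i)) * (p + q) ^ 2 =
          2 * (p - q) * (p + q) - ((p + q) ^ 2 + (p - q) ^ 2 - 4 * lam i) := by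
        have e1 : 2 * t * (p + q) ^ 2 = 2 * (p - q) * (p + q) := by
          linear_combination 2 * (p + q) * ht'
        linear_combination e1 - hβ' + lam i * hα'
      have hpos : 0 ≤ (2 * t - (1 + β - α * lam i)) * (p + q) ^ 2 := by
        rw [key]
        have e2 : 2 * (p - q) * (p + q) - ((p + q) ^ 2 + (p - q) ^ 2 - 4 * lam i) =
            4 * lam i - 4 * q ^ 2 := by ring
        rw [e2]
        linarith [hml, hq2.ge, hq2.le]
      have h5 := div_nonneg hpos hd2.le
      rwa [mul_div_cancel_right₀ _ (ne_of_gt hd2)] at h5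
  -- the constant
  set C := 1 / ρ + 1 / (ρ - t) with hC
  have hρt : 0 < ρ - t := by linarith [hβρ]
  have hC0 : 0 < C := by rw [hC]; positivity
  set c := (Real.sqrt n + 1) * C with hc
  have hc0 : 0 < c := by
    have : (0:ℝ) ≤ Real.sqrt n := Real.sqrt_nonneg _
    rw [hc]; nlinarith
  refine ⟨c, hc0, ?_⟩
  intro x hx
  set e : ℕ → EuclideanSpace ℝ (Fin n) := fun k => x k - xstar with he
  set D := ‖e 0‖ + ‖e 1‖ with hD
  have hD0 : 0 ≤ D := by rw [hD]; positivity
  -- coordinates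
  set u : Fin n → ℕ → ℝ := fun i k => B.repr (e k) i with hu
  -- recurrence for coordinates
  have hrec : ∀ i : Fin n, ∀ k : ℕ, 1 ≤ k →
      u i (k + 1) = (1 + β - α * lam i) * u i k - t ^ 2 * u i (k - 1) := by
    intro i k hk
    have hQe : Q (e k) = Q (x k) - b := by
      rw [he]; simp only [map_sub, hstar]
    have hvec : e (k + 1) = e k - α • Q (e k) + β • (e k - e (k - 1)) := by
      rw [he]
      simp only [hx k hk, hQe, map_sub, hstar]
      abel_nf
    have h1 : B.repr (e (k + 1)) i =
        B.repr (e k) i - α * B.repr (Q (e k)) i +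
          β * (B.repr (e k) i - B.repr (e (k - 1)) i) := by
      rw [hvec]
      simp [map_add, map_sub, map_smul]
    have h2 : B.repr (Q (e k)) i = lam i * B.repr (e k) i :=
      hQsym.eigenvectorBasis_apply_self_apply finrank_euclideanSpace_fin (e k) i
    rw [ht2]
    simp only [hu]
    rw [h1, h2]
    ring
  -- scalar bound on each coordinate
  have hcoord : ∀ i : Fin n, ∀ k : ℕ, |u i k| ≤ C * ρ ^ k * (|u i 0| + |u i 1|) := by
    intro i k
    exact scalar_bound t ρ (1 + β - α * lam i) ht0 hβρ hρ1.le (hacoef i) (u i)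
      (fun k hk => hrec i k hk) k
  -- coordinate values are bounded by the norm
  have hcn : ∀ i : Fin n, ∀ k : ℕ, |u i k| ≤ ‖e k‖ := by
    intro i k
    have : u i k = ⟪B i, e k⟫ := B.repr_apply_apply (e k) i
    rw [this]
    calc |⟪B i, e k⟫| ≤ ‖B i‖ * ‖e k‖ := abs_real_inner_le_norm _ _
    _ = ‖e k‖ := by rw [B.orthonormal.1 i, one_mul]
  -- each coordinate bound with uniform RHS
  have hcoord' : ∀ i : Fin n, ∀ k : ℕ, |u i k| ≤ C * ρ ^ k * D := by
    intro i k
    calc |u i k| ≤ C * ρ ^ k * (|u i 0| + |u i 1|) := hcoord i k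
    _ ≤ C * ρ ^ k * D := by
        apply mul_le_mul_of_nonneg_left _ (by positivity)
        rw [hD]
        exact add_le_add (hcn i 0) (hcn i 1)
  -- Parseval
  have hnorm_sq : ∀ k : ℕ, ‖e k‖ ^ 2 = ∑ i : Fin n, (u i k) ^ 2 := by
    intro k
    have h1 : ‖e k‖ = ‖B.repr (e k)‖ := (B.repr.norm_map (e k)).symm
    rw [h1, EuclideanSpace.norm_eq, Real.sq_sqrt (by positivity)]
    apply Finset.sum_congr rfl
    intro i _
    rw [Real.norm_eq_abs, sq_abs]
  intro k
  have hbound_sq : ‖e k‖ ^ 2 ≤ (n : ℝ) * (C * ρ ^ k * D) ^ 2 := by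
    rw [hnorm_sq k]
    have hsum : (∑ i : Fin n, (u i k) ^ 2) ≤ (∑ _i : Fin n, (C * ρ ^ k * D) ^ 2) := by
      apply Finset.sum_le_sum
      intro i _
      have h := hcoord' i k
      have h2 := pow_le_pow_left₀ (abs_nonneg (u i k)) h 2
      rwa [sq_abs] at h2
    have hconst : (∑ _i : Fin n, (C * ρ ^ k * D) ^ 2) = (n : ℝ) * (C * ρ ^ k * D) ^ 2 := by
      rw [Finset.sum_const, Finset.card_univ, Fintype.card_fin]
      simp [nsmul_eq_mul]
    rw [← hconst]
    exact hsum
  have hsqrtn : Real.sqrt n ^ 2 = (n : ℝ) := Real.sq_sqrt (Nat.cast_nonneg n)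
  have hfinal_sq : ‖e k‖ ^ 2 ≤ (c * ρ ^ k * D) ^ 2 := by
    have h1 : (n : ℝ) * (C * ρ ^ k * D) ^ 2 ≤ (c * ρ ^ k * D) ^ 2 := by
      have hs0 : (0:ℝ) ≤ Real.sqrt n := Real.sqrt_nonneg _
      have e2 : (c * ρ ^ k * D) ^ 2 = (Real.sqrt n + 1) ^ 2 * (C * ρ ^ k * D) ^ 2 := by
        rw [hc]; ring
      have h4 : (n : ℝ) ≤ (Real.sqrt n + 1) ^ 2 := by
        calc (n : ℝ) = Real.sqrt n ^ 2 := hsqrtn.symm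
          _ ≤ (Real.sqrt n + 1) ^ 2 :=
            pow_le_pow_left₀ hs0 (le_add_of_nonneg_right zero_le_one) 2
      rw [e2]
      exact mul_le_mul_of_nonneg_right h4 (sq_nonneg _)
    exact le_trans hbound_sq h1
  have hcρD : 0 ≤ c * ρ ^ k * D := by positivity
  have h6 := Real.sqrt_le_sqrt hfinal_sq
  rwa [Real.sqrt_sq (norm_nonneg _), Real.sqrt_sq hcρD] at h6
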